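/- (Proof step of Theorem 2, inequality (16).) In the setting of Theorem 1 with d_D^π the normalized discounted occupancy (entrywise nonnegative, summing to 1), assume dataset counts n : S × A → ℕ with n(s) := ∑_a n(s,a) ≥ 1 for all s, |D| := ∑_s n(s), d^D(s) := n(s)/|D|, u^π(s) := C₀·∑_a π(a|s)·n(s,a)^{−1/2} with C₀ > 0, every π ∈ Π data-supported (π(a|s) > 0 implies n(s,a) ≥ 1), Dis(π)(s) ≥ 0 for all π ∈ Π and s, and α = α'/|D| with α' > 0. Suppose s₁ minimizes d^D (equivalently minimizes n(s)), and there are π₀ ∈ Π, ε_d ∈ (0,1), Δ_β > 0 with d_D^{π₀}(s₁) > ε_d and Dis(π₀)(s) ≤ Δ_β for all s. If π̄₁ maximizes π ↦ ⟨d_D^π, u^π − α·w^π·Dis(π)⟩ over Π, where w^π(s) := d_D^π(s)/d^D(s), then ⟨d_D^{π̄₁}, u^{π̄₁}⟩ ≥ C₀·ε_d/√(n(s₁)) − α'·Δ_β/n(s₁). -/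

import Mathlib

open Matrix Finset
open scoped NNReal

/-- The activity matrix `Aπ` of a policy `π`: `Aπ s (s', a) = π s a` if `s' = s`, else `0`. -/
def actMat {S A : Type*} [DecidableEq S] (π : S → A → ℝ) : Matrix S (S × A) ℝ :=
  Matrix.of fun s p => if p.1 = s then π s p.2 else 0

/-- The value vector `V^π = (I − γ Aπ P)⁻¹ (Aπ r)`. -/
noncomputable def valVec {S A : Type*} [Fintype S] [Fintype A] [DecidableEq S]
    (γ : ℝ) (P : Matrix (S × A) S ℝ) (r : S × A → ℝ) (π : S → A → ℝ) : S → ℝ :=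
  (1 - γ • (actMat π * P))⁻¹.mulVec ((actMat π).mulVec r)

/-- The discounted occupancy row vector `d^π = ρᵀ (I − γ Aπ P)⁻¹`. -/
noncomputable def occVec {S A : Type*} [Fintype S] [Fintype A] [DecidableEq S]
    (γ : ℝ) (P : Matrix (S × A) S ℝ) (ρ : S → ℝ) (π : S → A → ℝ) : S → ℝ :=
  Matrix.vecMul ρ (1 - γ • (actMat π * P))⁻¹

/-- The normalized discounted occupancy `(1 − γ)·ρᵀ (I − γ Aπ P)⁻¹`. -/
noncomputable def noccVec {S A : Type*} [Fintype S] [Fintype A] [DecidableEq S]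
    (γ : ℝ) (P : Matrix (S × A) S ℝ) (ρ : S → ℝ) (π : S → A → ℝ) : S → ℝ :=
  fun s => (1 - γ) * Matrix.vecMul ρ (1 - γ • (actMat π * P))⁻¹ s

section Aux
variable {S : Type*} [Fintype S] [DecidableEq S]

attribute [local instance] Matrix.linftyOpNormedRing Matrix.linftyOpNormedAlgebra

lemma aux_pow_entry_nonneg (t : Matrix S S ℝ) (h : ∀ i j, 0 ≤ t i j) (k : ℕ) :
    ∀ i j, 0 ≤ (t ^ k) i j := by
  induction k with
  | zero => intro i j; rw [pow_zero, Matrix.one_apply]; positivity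
  | succ k ih =>
    intro i j
    rw [pow_succ, Matrix.mul_apply]
    exact Finset.sum_nonneg fun l _ => mul_nonneg (ih i l) (h l j)

lemma aux_norm_le (M : Matrix S S ℝ) (h0 : ∀ i j, 0 ≤ M i j) (h1 : ∀ i, ∑ j, M i j = 1) :
    ‖M‖ ≤ 1 := by
  rw [Matrix.linfty_opNorm_def]
  have : ∀ i : S, (∑ j, ‖M i j‖₊ : ℝ≥0) ≤ 1 := by
    intro i
    have : ((∑ j, ‖M i j‖₊ : ℝ≥0) : ℝ) = ∑ j, M i j := by
      push_cast
      exact Finset.sum_congr rfl fun j _ => Real.norm_of_nonneg (h0 i j)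
    have h2 : ((∑ j, ‖M i j‖₊ : ℝ≥0) : ℝ) ≤ 1 := by rw [this, h1 i]
    exact_mod_cast h2
  calc ((Finset.univ.sup fun i : S => ∑ j, ‖M i j‖₊ : ℝ≥0) : ℝ)
      ≤ ((1 : ℝ≥0) : ℝ) := by
        exact_mod_cast Finset.sup_le fun i _ => this i
    _ = 1 := by norm_num

lemma aux_occ (γ : ℝ) (h0γ : 0 ≤ γ) (hγ : γ < 1) (M : Matrix S S ℝ)
    (hM0 : ∀ i j, 0 ≤ M i j) (hM1 : ∀ i, ∑ j, M i j = 1)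
    (ρ : S → ℝ) (hρ0 : ∀ s, 0 ≤ ρ s) (hρ1 : ∑ s, ρ s = 1) :
    (∀ s, 0 ≤ (1 - γ) * Matrix.vecMul ρ (1 - γ • M)⁻¹ s) ∧
    (∑ s, (1 - γ) * Matrix.vecMul ρ (1 - γ • M)⁻¹ s = 1) := by
  set t : Matrix S S ℝ := γ • M with ht
  have htnorm : ‖t‖ < 1 := by
    calc ‖t‖ = |γ| * ‖M‖ := by rw [ht, norm_smul, Real.norm_eq_abs]
    _ ≤ |γ| * 1 := by
        apply mul_le_mul_of_nonneg_left (aux_norm_le M hM0 hM1) (abs_nonneg γ)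
    _ = γ := by rw [mul_one, abs_of_nonneg h0γ]
    _ < 1 := hγ
  have hunit : IsUnit ((1 : Matrix S S ℝ) - t) := isUnit_one_sub_of_norm_lt_one htnorm
  have hinv : (1 - t)⁻¹ = ∑' k : ℕ, t ^ k := by
    rw [Matrix.nonsing_inv_eq_ringInverse, ← geom_series_eq_inverse t htnorm]
    rfl
  have hentry : ∀ i j, 0 ≤ (1 - t)⁻¹ i j := by
    intro i j
    rw [hinv]
    have hsum : Summable (fun k : ℕ => t ^ k) := summable_geometric_of_norm_lt_one htnorm
    let e : Matrix S S ℝ →ₗ[ℝ] ℝ := Matrix.entryLinearMap ℝ ℝ i j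
    have hcont : Continuous e := LinearMap.continuous_of_finiteDimensional e
    have : e (∑' k : ℕ, t ^ k) = ∑' k : ℕ, e (t ^ k) :=
      (hsum.hasSum.map e hcont).tsum_eq.symm
    show (0:ℝ) ≤ e (∑' k : ℕ, t ^ k)
    rw [this]
    exact tsum_nonneg fun k => aux_pow_entry_nonneg t
      (fun i j => by rw [ht]; exact smul_nonneg h0γ (hM0 i j)) k i j
  constructor
  · intro s
    apply mul_nonneg (by linarith)
    rw [Matrix.vecMul]
    exact Finset.sum_nonneg fun i _ => mul_nonneg (hρ0 i) (hentry i s)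
  · have hdet : IsUnit (1 - t).det := (Matrix.isUnit_iff_isUnit_det _).mp hunit
    have hBB : (1 - t)⁻¹ * (1 - t) = 1 := Matrix.nonsing_inv_mul _ hdet
    have hvm : Matrix.vecMul (Matrix.vecMul ρ (1 - t)⁻¹) (1 - t) = ρ := by
      rw [Matrix.vecMul_vecMul, hBB, Matrix.vecMul_one]
    set v : S → ℝ := Matrix.vecMul ρ (1 - t)⁻¹ with hv
    have hsum1 : ∑ s, Matrix.vecMul v (1 - t) s = 1 := by rw [hvm, hρ1]
    have hexp : ∑ s, Matrix.vecMul v (1 - t) s = (1 - γ) * ∑ i, v i := by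
      simp only [Matrix.vecMul, dotProduct]
      rw [Finset.sum_comm]
      calc ∑ i, ∑ s, v i * (1 - t) i s
          = ∑ i, v i * ∑ s, (1 - t) i s := by
            exact Finset.sum_congr rfl fun i _ => (Finset.mul_sum _ _ _).symm
        _ = ∑ i, v i * (1 - γ) := by
            refine Finset.sum_congr rfl fun i _ => ?_
            congr 1
            simp only [Matrix.sub_apply, Matrix.one_apply, ht, Matrix.smul_apply,
              smul_eq_mul, Finset.sum_sub_distrib, ← Finset.mul_sum, hM1 i]
            simp
        _ = (1 - γ) * ∑ i, v i := by rw [← Finset.sum_mul]; ring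
    have : (1 - γ) * ∑ i, v i = 1 := by rw [← hexp, hsum1]
    rw [← Finset.mul_sum]
    exact this

lemma actMat_mul_entry {S A : Type*} [Fintype S] [Fintype A] [DecidableEq S]
    (π : S → A → ℝ) (PD : Matrix (S × A) S ℝ) (i j : S) :
    (actMat π * PD) i j = ∑ a, π i a * PD (i, a) j := by
  rw [Matrix.mul_apply, Fintype.sum_prod_type]
  simp only [actMat, Matrix.of_apply, ite_mul, zero_mul]
  rw [Finset.sum_comm]
  simp

end Aux

/-- proof step of Theorem 2, inequality (16). With dataset counts `n`,
Hoeffding uncertainty `u^π(s) = C₀ ∑ₐ π(a|s) n(s,a)^{-1/2}`, `α = α'/|D|`, and `s₁` the state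
of minimal empirical density, any maximizer `π̄₁` of the state-aware supremum term satisfies
`⟨d_D^{π̄₁}, u^{π̄₁}⟩ ≥ C₀ ε_d/√(n(s₁)) − α' Δ_β/n(s₁)`. -/
theorem state_aware_sup_uncertainty_lower_bound {S A : Type*} [Fintype S] [Fintype A]
    [Nonempty S] [Nonempty A] [DecidableEq S]
    (PD : Matrix (S × A) S ℝ)
    (hPD0 : ∀ p s, 0 ≤ PD p s) (hPD1 : ∀ p, ∑ s, PD p s = 1)
    (γ : ℝ) (hγ0 : 0 ≤ γ) (hγ1 : γ < 1)
    (ρ : S → ℝ) (hρ0 : ∀ s, 0 ≤ ρ s) (hρ1 : ∑ s, ρ s = 1)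
    (Pol : Finset (S → A → ℝ)) (hPolne : Pol.Nonempty)
    (hPol : ∀ π ∈ Pol, (∀ s a, 0 ≤ π s a) ∧ (∀ s, ∑ a, π s a = 1))
    (n : S × A → ℕ) (hn : ∀ s : S, 1 ≤ ∑ a, n (s, a))
    (dDat : S → ℝ)
    (hdDat : ∀ s, dDat s = (↑(∑ a, n (s, a)) : ℝ) / (↑(∑ s', ∑ a, n (s', a)) : ℝ))
    (C₀ : ℝ) (hC₀ : 0 < C₀)
    (u : (S → A → ℝ) → S → ℝ)
    (hu : ∀ π s, u π s = C₀ * ∑ a, π s a * (Real.sqrt (n (s, a)))⁻¹)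
    (hsupp : ∀ π ∈ Pol, ∀ s a, 0 < π s a → 1 ≤ n (s, a))
    (Dis : (S → A → ℝ) → S → ℝ) (hDis : ∀ π ∈ Pol, ∀ s, 0 ≤ Dis π s)
    (α α' : ℝ) (hα'0 : 0 < α')
    (hα : α = α' / (↑(∑ s', ∑ a, n (s', a)) : ℝ))
    (s₁ : S) (hs₁ : ∀ s, dDat s₁ ≤ dDat s)
    (π₀ : S → A → ℝ) (hπ₀ : π₀ ∈ Pol)
    (εd Δβ : ℝ) (hεd0 : 0 < εd) (hεd1 : εd < 1) (hΔβ : 0 < Δβ)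
    (hπ₀occ : εd < noccVec γ PD ρ π₀ s₁) (hπ₀Dis : ∀ s, Dis π₀ s ≤ Δβ)
    (π₁ : S → A → ℝ) (hπ₁ : π₁ ∈ Pol)
    (hπ₁max : ∀ π ∈ Pol,
      ∑ s, noccVec γ PD ρ π s * (u π s - α * (noccVec γ PD ρ π s / dDat s * Dis π s))
        ≤ ∑ s, noccVec γ PD ρ π₁ s
            * (u π₁ s - α * (noccVec γ PD ρ π₁ s / dDat s * Dis π₁ s))) :
    C₀ * εd / Real.sqrt (↑(∑ a, n (s₁, a)) : ℝ) - α' * Δβ / (↑(∑ a, n (s₁, a)) : ℝ)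
      ≤ ∑ s, noccVec γ PD ρ π₁ s * u π₁ s := by
  classical
  obtain ⟨hπ₀0, hπ₀1⟩ := hPol π₀ hπ₀
  obtain ⟨hπ₁0, hπ₁1⟩ := hPol π₁ hπ₁
  -- occupancy properties
  have hocc : ∀ π ∈ Pol, (∀ s, 0 ≤ noccVec γ PD ρ π s) ∧ (∑ s, noccVec γ PD ρ π s = 1) := by
    intro π hπ
    obtain ⟨hπa, hπb⟩ := hPol π hπ
    have hM0 : ∀ i j, 0 ≤ (actMat π * PD) i j := by
      intro i j
      rw [actMat_mul_entry]
      exact Finset.sum_nonneg fun a _ => mul_nonneg (hπa i a) (hPD0 _ j)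
    have hM1 : ∀ i, ∑ j, (actMat π * PD) i j = 1 := by
      intro i
      simp_rw [actMat_mul_entry]
      rw [Finset.sum_comm]
      calc ∑ a, ∑ j, π i a * PD (i, a) j = ∑ a, π i a * ∑ j, PD (i, a) j := by
            exact Finset.sum_congr rfl fun a _ => (Finset.mul_sum _ _ _).symm
        _ = 1 := by simp_rw [hPD1]; simpa using hπb i
    exact aux_occ γ hγ0 hγ1 _ hM0 hM1 ρ hρ0 hρ1
  obtain ⟨hd₀0, hd₀1⟩ := hocc π₀ hπ₀
  obtain ⟨hd₁0, hd₁1⟩ := hocc π₁ hπ₁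
  have hd₀le1 : ∀ s, noccVec γ PD ρ π₀ s ≤ 1 := by
    intro s
    calc noccVec γ PD ρ π₀ s ≤ ∑ s', noccVec γ PD ρ π₀ s' :=
          Finset.single_le_sum (fun s' _ => hd₀0 s') (Finset.mem_univ s)
      _ = 1 := hd₀1
  -- numeric facts
  have hN₁1 : 1 ≤ ∑ a, n (s₁, a) := hn s₁
  have hN₁pos : (0:ℝ) < (↑(∑ a, n (s₁, a)) : ℝ) := by exact_mod_cast hN₁1
  have hDge : (∑ a, n (s₁, a)) ≤ ∑ s', ∑ a, n (s', a) :=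
    Finset.single_le_sum (f := fun s' => ∑ a, n (s', a))
      (fun s' _ => Nat.zero_le _) (Finset.mem_univ s₁)
  have hDpos : (0:ℝ) < (↑(∑ s', ∑ a, n (s', a)) : ℝ) := by
    have : 1 ≤ ∑ s', ∑ a, n (s', a) := le_trans hN₁1 hDge
    exact_mod_cast this
  have hdDatpos : ∀ s, 0 < dDat s := by
    intro s
    rw [hdDat]
    have : (0:ℝ) < (↑(∑ a, n (s, a)) : ℝ) := by exact_mod_cast hn s
    exact div_pos this hDpos
  have hαpos : 0 < α := by rw [hα]; exact div_pos hα'0 hDpos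
  have hu0 : ∀ π, (∀ s a, 0 ≤ π s a) → ∀ s, 0 ≤ u π s := by
    intro π hπa s
    rw [hu]
    exact mul_nonneg hC₀.le (Finset.sum_nonneg fun a _ =>
      mul_nonneg (hπa s a) (inv_nonneg.mpr (Real.sqrt_nonneg _)))
  -- step 1 : drop the penalty for π₁
  have step1 : ∑ s, noccVec γ PD ρ π₁ s
        * (u π₁ s - α * (noccVec γ PD ρ π₁ s / dDat s * Dis π₁ s))
      ≤ ∑ s, noccVec γ PD ρ π₁ s * u π₁ s := by
    apply Finset.sum_le_sum
    intro s _
    apply mul_le_mul_of_nonneg_left _ (hd₁0 s)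
    have : 0 ≤ α * (noccVec γ PD ρ π₁ s / dDat s * Dis π₁ s) :=
      mul_nonneg hαpos.le (mul_nonneg (div_nonneg (hd₁0 s) (hdDatpos s).le)
        (hDis π₁ hπ₁ s))
    linarith
  have step2 := hπ₁max π₀ hπ₀
  -- split the π₀ sum
  have split : ∑ s, noccVec γ PD ρ π₀ s
        * (u π₀ s - α * (noccVec γ PD ρ π₀ s / dDat s * Dis π₀ s))
      = (∑ s, noccVec γ PD ρ π₀ s * u π₀ s)
        - ∑ s, noccVec γ PD ρ π₀ s
            * (α * (noccVec γ PD ρ π₀ s / dDat s * Dis π₀ s)) := by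
    rw [← Finset.sum_sub_distrib]
    exact Finset.sum_congr rfl fun s _ => by ring
  -- key lower bound on positive part
  have hsqrtpos : 0 < Real.sqrt (↑(∑ a, n (s₁, a)) : ℝ) := Real.sqrt_pos.mpr hN₁pos
  have husq : C₀ * (Real.sqrt (↑(∑ a, n (s₁, a)) : ℝ))⁻¹ ≤ u π₀ s₁ := by
    rw [hu]
    have hterm : ∀ a, π₀ s₁ a * (Real.sqrt (↑(∑ a, n (s₁, a)) : ℝ))⁻¹
        ≤ π₀ s₁ a * (Real.sqrt (n (s₁, a)))⁻¹ := by
      intro a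
      rcases eq_or_lt_of_le (hπ₀0 s₁ a) with h | h
      · rw [← h]; simp
      · apply mul_le_mul_of_nonneg_left _ h.le
        have hge1 : 1 ≤ n (s₁, a) := hsupp π₀ hπ₀ s₁ a h
        have hle : (↑(n (s₁, a)) : ℝ) ≤ (↑(∑ a, n (s₁, a)) : ℝ) := by
          exact_mod_cast Finset.single_le_sum (f := fun a => n (s₁, a))
            (fun a _ => Nat.zero_le _) (Finset.mem_univ a)
        have hpos : (0:ℝ) < Real.sqrt (n (s₁, a)) := by
          apply Real.sqrt_pos.mpr
          exact_mod_cast hge1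
        exact inv_anti₀ hpos (Real.sqrt_le_sqrt hle)
    calc C₀ * (Real.sqrt (↑(∑ a, n (s₁, a)) : ℝ))⁻¹
        = C₀ * ∑ a, π₀ s₁ a * (Real.sqrt (↑(∑ a, n (s₁, a)) : ℝ))⁻¹ := by
          rw [← Finset.sum_mul, hπ₀1 s₁, one_mul]
      _ ≤ C₀ * ∑ a, π₀ s₁ a * (Real.sqrt (n (s₁, a)))⁻¹ :=
          mul_le_mul_of_nonneg_left (Finset.sum_le_sum fun a _ => hterm a) hC₀.le
  have keyA : εd * (C₀ * (Real.sqrt (↑(∑ a, n (s₁, a)) : ℝ))⁻¹)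
      ≤ ∑ s, noccVec γ PD ρ π₀ s * u π₀ s := by
    calc εd * (C₀ * (Real.sqrt (↑(∑ a, n (s₁, a)) : ℝ))⁻¹)
        ≤ noccVec γ PD ρ π₀ s₁ * u π₀ s₁ := by
          apply mul_le_mul hπ₀occ.le husq
            (mul_nonneg hC₀.le (inv_nonneg.mpr hsqrtpos.le)) (hd₀0 s₁)
      _ ≤ ∑ s, noccVec γ PD ρ π₀ s * u π₀ s :=
          Finset.single_le_sum
            (fun s _ => mul_nonneg (hd₀0 s) (hu0 π₀ hπ₀0 s)) (Finset.mem_univ s₁)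
  -- key upper bound on penalty part
  have keyB : ∑ s, noccVec γ PD ρ π₀ s
        * (α * (noccVec γ PD ρ π₀ s / dDat s * Dis π₀ s))
      ≤ α' * Δβ / (↑(∑ a, n (s₁, a)) : ℝ) := by
    have hterm : ∀ s, noccVec γ PD ρ π₀ s
          * (α * (noccVec γ PD ρ π₀ s / dDat s * Dis π₀ s))
        ≤ noccVec γ PD ρ π₀ s * (α * ((dDat s₁)⁻¹ * Δβ)) := by
      intro s
      apply mul_le_mul_of_nonneg_left _ (hd₀0 s)
      apply mul_le_mul_of_nonneg_left _ hαpos.le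
      have h1 : noccVec γ PD ρ π₀ s / dDat s ≤ (dDat s₁)⁻¹ := by
        rw [← one_div]
        exact div_le_div₀ zero_le_one (hd₀le1 s) (hdDatpos s₁) (hs₁ s)
      exact mul_le_mul h1 (hπ₀Dis s) (hDis π₀ hπ₀ s)
        (inv_nonneg.mpr (hdDatpos s₁).le)
    calc ∑ s, noccVec γ PD ρ π₀ s
          * (α * (noccVec γ PD ρ π₀ s / dDat s * Dis π₀ s))
        ≤ ∑ s, noccVec γ PD ρ π₀ s * (α * ((dDat s₁)⁻¹ * Δβ)) :=
          Finset.sum_le_sum fun s _ => hterm s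
      _ = α * ((dDat s₁)⁻¹ * Δβ) := by rw [← Finset.sum_mul, hd₀1, one_mul]
      _ = α' * Δβ / (↑(∑ a, n (s₁, a)) : ℝ) := by
          rw [hα, hdDat]
          set DD : ℝ := (↑(∑ s', ∑ a, n (s', a)) : ℝ) with hDD
          set NN : ℝ := (↑(∑ a, n (s₁, a)) : ℝ) with hNN
          have h1 : DD ≠ 0 := ne_of_gt hDpos
          have h2 : NN ≠ 0 := ne_of_gt hN₁pos
          field_simp
  have hrw : C₀ * εd / Real.sqrt (↑(∑ a, n (s₁, a)) : ℝ)
      = εd * (C₀ * (Real.sqrt (↑(∑ a, n (s₁, a)) : ℝ))⁻¹) := by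
    rw [div_eq_mul_inv]; ring
  linarith [step1, step2, keyA, keyB, split, hrw]
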